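/- For all real x > 0, the function h(x) = (1+x)(e - (1 + 1/x)^x) satisfies h(x) > e/2. -/

import Mathlib

open Real Filter Set Topology

/-- Midpoint inequality: `2u < log(1+u) - log(1-u)` for `0 < u < 1`. -/
lemma aux_midpoint {u : ℝ} (h0 : 0 < u) (h1 : u < 1) :
    2 * u < Real.log (1 + u) - Real.log (1 - u) := by
  set F : ℝ → ℝ := fun v => Real.log (1 + v) - Real.log (1 - v) - 2 * v with hF
  have key : StrictMonoOn F (Set.Ico 0 1) := by
    apply strictMonoOn_of_deriv_pos (convex_Ico 0 1)
    · apply ContinuousOn.sub (ContinuousOn.sub ?_ ?_) (by fun_prop)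
      · apply ContinuousOn.log (by fun_prop)
        intro v hv; simp only [mem_Ico] at hv; nlinarith
      · apply ContinuousOn.log (by fun_prop)
        intro v hv; simp only [mem_Ico] at hv; nlinarith
    · intro v hv
      rw [interior_Ico] at hv
      obtain ⟨hv0, hv1⟩ := hv
      have h1v : (0:ℝ) < 1 + v := by linarith
      have h2v : (0:ℝ) < 1 - v := by linarith
      have d1 : HasDerivAt (fun v : ℝ => Real.log (1 + v)) (1 / (1 + v)) v := by
        simpa using (((hasDerivAt_id v).const_add 1).log h1v.ne')
      have d2 : HasDerivAt (fun v : ℝ => Real.log (1 - v)) (-1 / (1 - v)) v := by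
        have : HasDerivAt (fun v : ℝ => 1 - v) (-1) v := by
          simpa using ((hasDerivAt_id v).const_sub 1)
        simpa using (this.log h2v.ne')
      have d3 : HasDerivAt F (1 / (1 + v) - -1 / (1 - v) - 2) v := by
        have h3 := ((d1.sub d2).sub ((hasDerivAt_id v).const_mul 2)); rw [mul_one] at h3; exact h3
      rw [d3.deriv]
      have : 1 / (1 + v) - -1 / (1 - v) - 2 = 2 * v ^ 2 / ((1 + v) * (1 - v)) := by
        field_simp; ring
      rw [this]
      positivity
  have h := key (by simp) (⟨le_of_lt h0, h1⟩ : u ∈ Set.Ico 0 1) h0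
  simp only [hF] at h
  simp only [add_zero, sub_zero, Real.log_one, mul_zero] at h
  linarith

/-- `2/(2x+1) < log(1+1/x)` for `x > 0`. -/
lemma aux_key {x : ℝ} (hx : 0 < x) : 2 / (2 * x + 1) < Real.log (1 + 1 / x) := by
  have h21 : (0:ℝ) < 2 * x + 1 := by linarith
  have hu0 : 0 < 1 / (2 * x + 1) := by positivity
  have hu1 : 1 / (2 * x + 1) < 1 := by rw [div_lt_one h21]; linarith
  have h := aux_midpoint hu0 hu1
  have e1 : (1:ℝ) + 1 / (2 * x + 1) = (2 * x + 2) / (2 * x + 1) := by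
    rw [one_add_div h21.ne']; ring_nf
  have e2 : (1:ℝ) - 1 / (2 * x + 1) = (2 * x) / (2 * x + 1) := by
    rw [one_sub_div h21.ne']; ring_nf
  have e3 : Real.log (1 + 1 / (2 * x + 1)) - Real.log (1 - 1 / (2 * x + 1))
      = Real.log (1 + 1 / x) := by
    rw [e1, e2, Real.log_div (by positivity) h21.ne', Real.log_div (by positivity) h21.ne']
    have : (1 : ℝ) + 1 / x = (2 * x + 2) / (2 * x) := by
      rw [eq_div_iff (by positivity : (2*x:ℝ) ≠ 0)]; field_simp
    rw [this, Real.log_div (by positivity) (by positivity)]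
    ring
  rw [e3] at h
  calc 2 / (2 * x + 1) = 2 * (1 / (2 * x + 1)) := by ring
    _ < _ := h

noncomputable def auxG : ℝ → ℝ := fun x =>
  1 - x * (Real.log (x + 1) - Real.log x) - (Real.log (2 * x + 2) - Real.log (2 * x + 1))

lemma auxG_anti : StrictAntiOn auxG (Set.Ioi 0) := by
  apply strictAntiOn_of_deriv_neg (convex_Ioi 0)
  · apply ContinuousOn.sub (ContinuousOn.sub (by fun_prop) ?_) (ContinuousOn.sub ?_ ?_)
    · apply ContinuousOn.mul (by fun_prop)
      apply ContinuousOn.sub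
      · exact ContinuousOn.log (by fun_prop) (fun x hx => by simp at hx; positivity)
      · exact ContinuousOn.log (by fun_prop) (fun x hx => by simp at hx; positivity)
    · exact ContinuousOn.log (by fun_prop) (fun x hx => by simp at hx; positivity)
    · exact ContinuousOn.log (by fun_prop) (fun x hx => by simp at hx; positivity)
  · intro x hx
    rw [interior_Ioi] at hx
    have hx0 : (0:ℝ) < x := hx
    have h1 : (0:ℝ) < x + 1 := by linarith
    have h2 : (0:ℝ) < 2 * x + 2 := by linarith
    have h3 : (0:ℝ) < 2 * x + 1 := by linarith
    have dlog1 : HasDerivAt (fun x : ℝ => Real.log (x + 1)) (1 / (x + 1)) x := by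
      simpa using (((hasDerivAt_id x).add_const 1).log h1.ne')
    have dlog2 : HasDerivAt (fun x : ℝ => Real.log x) (1 / x) x := by
      simpa using Real.hasDerivAt_log hx0.ne'
    have dlog3 : HasDerivAt (fun x : ℝ => Real.log (2 * x + 2)) (2 / (2 * x + 2)) x := by
      have : HasDerivAt (fun x : ℝ => 2 * x + 2) 2 x := by
        simpa using ((hasDerivAt_id x).const_mul 2).add_const 2
      simpa using (this.log h2.ne')
    have dlog4 : HasDerivAt (fun x : ℝ => Real.log (2 * x + 1)) (2 / (2 * x + 1)) x := by
      have : HasDerivAt (fun x : ℝ => 2 * x + 1) 2 x := by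
        simpa using ((hasDerivAt_id x).const_mul 2).add_const 1
      simpa using (this.log h3.ne')
    have dG : HasDerivAt auxG
        (-(1 * (Real.log (x + 1) - Real.log x) + x * (1 / (x + 1) - 1 / x))
          - (2 / (2 * x + 2) - 2 / (2 * x + 1))) x := by
      have dm : HasDerivAt (fun x : ℝ => x * (Real.log (x + 1) - Real.log x))
          (1 * (Real.log (x + 1) - Real.log x) + x * (1 / (x + 1) - 1 / x)) x :=
        (hasDerivAt_id x).mul (dlog1.sub dlog2)
      exact (dm.const_sub 1).sub (dlog3.sub dlog4)
    rw [dG.deriv]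
    have hk := aux_key hx0
    have hlog : Real.log (1 + 1 / x) = Real.log (x + 1) - Real.log x := by
      rw [show (1:ℝ) + 1 / x = (x + 1) / x by field_simp, Real.log_div h1.ne' hx0.ne']
    rw [hlog] at hk
    have he : -(1 * (Real.log (x + 1) - Real.log x) + x * (1 / (x + 1) - 1 / x))
        - (2 / (2 * x + 2) - 2 / (2 * x + 1))
        = 2 / (2 * x + 1) - (Real.log (x + 1) - Real.log x) := by
      field_simp
      ring
    rw [he]
    linarith

lemma auxG_tendsto : Tendsto auxG atTop (𝓝 0) := by
  have h1 : Tendsto (fun x : ℝ => x * (Real.log (x + 1) - Real.log x)) atTop (𝓝 1) := by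
    have := Real.tendsto_mul_log_one_add_div_atTop 1
    apply this.congr'
    filter_upwards [eventually_gt_atTop (0:ℝ)] with x hx
    rw [show (1:ℝ) + 1 / x = (x + 1) / x by field_simp, Real.log_div (by linarith) hx.ne']
  have h2 : Tendsto (fun x : ℝ => Real.log (2 * x + 2) - Real.log (2 * x + 1)) atTop (𝓝 0) := by
    have hr : Tendsto (fun x : ℝ => (2 * x + 2) / (2 * x + 1)) atTop (𝓝 1) := by
      have hz : Tendsto (fun x : ℝ => 1 / (2 * x + 1)) atTop (𝓝 0) := by
        have h : Tendsto (fun x : ℝ => 2 * x + 1) atTop atTop := by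
          apply tendsto_atTop_add_const_right
          exact Tendsto.const_mul_atTop two_pos tendsto_id
        simp only [one_div]; exact h.inv_tendsto_atTop
      have : Tendsto (fun x : ℝ => 1 + 1 / (2 * x + 1)) atTop (𝓝 (1 + 0)) :=
        tendsto_const_nhds.add hz
      rw [add_zero] at this
      apply this.congr'
      filter_upwards [eventually_gt_atTop (0:ℝ)] with x hx
      have h21 : (0:ℝ) < 2 * x + 1 := by linarith
      rw [one_add_div h21.ne']; ring_nf
    have hc : Tendsto (fun x : ℝ => Real.log ((2 * x + 2) / (2 * x + 1))) atTop (𝓝 0) := by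
      have := (Real.continuousAt_log one_ne_zero).tendsto
      rw [Real.log_one] at this
      exact this.comp hr
    apply hc.congr'
    filter_upwards [eventually_gt_atTop (0:ℝ)] with x hx
    rw [Real.log_div (by positivity) (by positivity)]
  have : Tendsto auxG atTop (𝓝 (1 - 1 - 0)) := (tendsto_const_nhds.sub h1).sub h2
  simpa using this

lemma auxG_pos {x : ℝ} (hx : 0 < x) : 0 < auxG x := by
  have hanti := auxG_anti
  have h1 : auxG (x + 1) < auxG x := hanti (mem_Ioi.2 hx) (mem_Ioi.2 (by linarith)) (by linarith)
  have h2 : 0 ≤ auxG (x + 1) := by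
    apply le_of_tendsto auxG_tendsto
    filter_upwards [eventually_ge_atTop (x + 1)] with y hy
    rcases eq_or_lt_of_le hy with h | h
    · exact le_of_eq (by rw [h])
    · exact (hanti (mem_Ioi.2 (by linarith)) (mem_Ioi.2 (by linarith)) h).le
  linarith

theorem stmt_17 (x : ℝ) (hx : 0 < x) :
    Real.exp 1 / 2 < (1 + x) * (Real.exp 1 - (1 + 1/x) ^ x) := by
  have h1 : (0:ℝ) < 1 + 1 / x := by positivity
  have hg := auxG_pos hx
  unfold auxG at hg
  have hlog : Real.log (x + 1) - Real.log x = Real.log (1 + 1 / x) := by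
    rw [show (1:ℝ) + 1 / x = (x + 1) / x by field_simp,
      Real.log_div (by linarith) hx.ne']
  have hlog2 : Real.log (2 * x + 2) - Real.log (2 * x + 1)
      = Real.log ((2 * x + 2) / (2 * x + 1)) := by
    rw [Real.log_div (by positivity) (by positivity)]
  rw [hlog, hlog2] at hg
  -- so x * log(1+1/x) < 1 - log((2x+2)/(2x+1))
  have hratio : (0:ℝ) < (2 * x + 2) / (2 * x + 1) := by positivity
  have hpow : (1 + 1/x) ^ x < Real.exp 1 * ((2 * x + 1) / (2 * x + 2)) := by
    rw [Real.rpow_def_of_pos h1]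
    calc Real.exp (Real.log (1 + 1/x) * x)
        < Real.exp (1 - Real.log ((2 * x + 2) / (2 * x + 1))) := by
          apply Real.exp_lt_exp.2; nlinarith [hg]
      _ = Real.exp 1 * ((2 * x + 1) / (2 * x + 2)) := by
          rw [Real.exp_sub, Real.exp_log hratio]
          field_simp
  have hx1 : (0:ℝ) < 1 + x := by linarith
  have key : (1 + x) * (Real.exp 1 - Real.exp 1 * ((2 * x + 1) / (2 * x + 2)))
      = Real.exp 1 / 2 := by
    field_simp
    ring
  have := mul_lt_mul_of_pos_left (sub_lt_sub_left hpow (Real.exp 1)) hx1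
  linarith [this, key.symm.le]
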